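/- Let d ≥ 2 be an integer and δ ∈ (0,1). If Y is a random variable with the Gamma distribution of shape d and rate 1 (equivalently, Y is the sum of d independent Exponential(1) random variables), then P(Y ≥ t) ≤ δ, where t = (√(2·ln(δ)·(2·ln(δ) − 9d)) + 3d − 2·ln(δ))/3. Equivalently, the (1−δ)-quantile ρ(δ,d) of Y is at most t. -/

import Mathlib

set_option maxHeartbeats 1000000


open MeasureTheory ProbabilityTheory Real

lemma log_aux_gamma {u : ℝ} (hu : 0 ≤ u) :
    Real.log (1 + u) ≤ u * (6 + u) / (6 + 4 * u) := by
  set f : ℝ → ℝ := fun x => x * (6 + x) / (6 + 4 * x) - Real.log (1 + x) with hf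
  have hd : ∀ x : ℝ, 0 < x → HasDerivAt f
      (((6 + 2*x) * (6 + 4*x) - x * (6 + x) * 4) / (6 + 4*x)^2 - 1/(1+x)) x := by
    intro x hx
    have h1 : (6 + 4*x) ≠ 0 := by nlinarith
    have h2 : (1 + x) ≠ 0 := by nlinarith
    have hnum : HasDerivAt (fun x : ℝ => x * (6 + x)) (6 + 2*x) x := by
      have : HasDerivAt (fun y : ℝ => y * (6 + y)) (1 * (6 + x) + x * (0 + 1)) x :=
        (hasDerivAt_id x).mul ((hasDerivAt_const x (6:ℝ)).add (hasDerivAt_id x))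
      convert this using 1
      simp [id_eq]
      ring
    have hden : HasDerivAt (fun x : ℝ => 6 + 4 * x) 4 x := by
      simpa using ((hasDerivAt_id x).const_mul (4:ℝ)).const_add (6:ℝ)
    have hrat := hnum.div hden h1
    have hlog : HasDerivAt (fun x : ℝ => Real.log (1 + x)) (1/(1+x)) x := by
      have h := (Real.hasDerivAt_log h2).comp x ((hasDerivAt_id x).const_add (1:ℝ))
      simpa [Function.comp_def] using h
    exact hrat.sub hlog
  have hcont : ContinuousOn f (Set.Ici 0) := by
    apply ContinuousOn.sub
    · apply ContinuousOn.div (by fun_prop) (by fun_prop)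
      intro x hx
      have hx' : (0:ℝ) ≤ x := hx
      nlinarith
    · apply ContinuousOn.log (by fun_prop)
      intro x hx
      have hx' : (0:ℝ) ≤ x := hx
      nlinarith
  have hmono : MonotoneOn f (Set.Ici 0) := by
    apply monotoneOn_of_deriv_nonneg (convex_Ici 0) hcont
    · intro x hx
      rw [interior_Ici] at hx
      exact (hd x hx).differentiableAt.differentiableWithinAt
    · intro x hx
      rw [interior_Ici] at hx
      have hx0 : 0 < x := hx
      rw [(hd x hx0).deriv]
      have hineq : 1/(1+x) ≤ ((6 + 2*x) * (6 + 4*x) - x * (6 + x) * 4)/(6+4*x)^2 := by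
        rw [div_le_div_iff₀ (by nlinarith [hx0]) (by nlinarith [sq_nonneg (6+4*x), hx0])]
        nlinarith [pow_pos hx0 3]
      linarith
  have h0 : f 0 = 0 := by simp [hf]
  have := hmono (Set.self_mem_Ici) (Set.mem_Ici.mpr hu) hu
  rw [h0] at this
  have : 0 ≤ u * (6 + u) / (6 + 4 * u) - Real.log (1 + u) := this
  linarith

/-- For `d ≥ 2` and `δ ∈ (0,1)`, if `Y ~ Gamma(d, 1)` then
`P(Y ≥ t) ≤ δ` where `t = (√(2·ln δ·(2·ln δ − 9d)) + 3d − 2·ln δ)/3`; equivalently the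
`(1−δ)`-quantile of the Gamma(d,1) distribution is at most `t`. -/
theorem gamma_tail_quantile_bound (d : ℕ) (hd : 2 ≤ d) (δ : ℝ) (hδ : δ ∈ Set.Ioo (0 : ℝ) 1) :
    gammaMeasure d 1
      (Set.Ici ((Real.sqrt (2 * Real.log δ * (2 * Real.log δ - 9 * d))
        + 3 * d - 2 * Real.log δ) / 3)) ≤ ENNReal.ofReal δ := by
  obtain ⟨hδ0, hδ1⟩ := hδ
  have hlogδ : Real.log δ < 0 := Real.log_neg hδ0 hδ1
  set L : ℝ := -Real.log δ with hLdef
  have hL : 0 < L := by simp only [hLdef]; linarith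
  have hdpos : (0:ℝ) < d := by
    have : (2:ℝ) ≤ d := by exact_mod_cast hd
    linarith
  have hsarg : (0:ℝ) ≤ 4*L^2 + 18*(d:ℝ)*L := by nlinarith
  set s : ℝ := Real.sqrt (4*L^2 + 18*(d:ℝ)*L) with hsdef
  have hs0 : 0 ≤ s := Real.sqrt_nonneg _
  have hs2 : s^2 = 4*L^2 + 18*(d:ℝ)*L := Real.sq_sqrt hsarg
  set u : ℝ := (s + 2*L)/(3*(d:ℝ)) with hudef
  have hu : 0 < u := div_pos (by linarith) (by linarith)
  have h1u : 0 < 1 + u := by linarith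
  set t : ℝ := (d:ℝ)*(1+u) with htdef
  have hlogeq : Real.log δ = -L := by rw [hLdef]; ring
  have hexpr : (Real.sqrt (2 * Real.log δ * (2 * Real.log δ - 9 * (d:ℝ)))
      + 3 * (d:ℝ) - 2 * Real.log δ) / 3 = t := by
    rw [hlogeq, show 2*(-L)*(2*(-L) - 9*(d:ℝ)) = 4*L^2 + 18*(d:ℝ)*L from by ring, ← hsdef,
      htdef, hudef]
    field_simp
    ring
  rw [hexpr]
  have ht0 : 0 < t := by rw [htdef]; exact mul_pos hdpos h1u
  set lam : ℝ := u/(1+u) with hlamdef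
  have hlam0 : 0 < lam := div_pos hu h1u
  have h1lam : 1 - lam = 1/(1+u) := by rw [hlamdef]; field_simp; ring
  have h1lampos : 0 < 1 - lam := by rw [h1lam]; exact div_pos one_pos h1u
  have hΓ : 0 < Real.Gamma (d:ℝ) := Real.Gamma_pos_of_pos hdpos
  set C : ℝ := Real.exp (-(lam*t)) / (1-lam) ^ (d:ℝ) with hCdef
  have hCpos : 0 < C := by
    rw [hCdef]
    exact div_pos (Real.exp_pos _) (Real.rpow_pos_of_pos h1lampos _)
  have hlamt : lam * t = (d:ℝ) * u := by
    rw [hlamdef, htdef]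
    field_simp
  -- Step 1: Chernoff bound
  have hstep1 : gammaMeasure (d:ℝ) 1 (Set.Ici t) ≤ ENNReal.ofReal C := by
    rw [gammaMeasure, withDensity_apply _ measurableSet_Ici]
    have hmeas : Measurable fun x => ENNReal.ofReal C * gammaPDF (d:ℝ) (1-lam) x :=
      ((measurable_gammaPDFReal (d:ℝ) (1-lam)).ennreal_ofReal).const_mul _
    calc ∫⁻ x in Set.Ici t, gammaPDF (d:ℝ) 1 x
        ≤ ∫⁻ x in Set.Ici t, ENNReal.ofReal C * gammaPDF (d:ℝ) (1-lam) x := by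
          apply setLIntegral_mono hmeas
          intro x hx
          have hx0 : (0:ℝ) ≤ x := le_trans ht0.le hx
          rw [gammaPDF_of_nonneg hx0, gammaPDF_of_nonneg hx0,
            ← ENNReal.ofReal_mul hCpos.le]
          apply ENNReal.ofReal_le_ofReal
          have hrp : (0:ℝ) < (1-lam) ^ (d:ℝ) := Real.rpow_pos_of_pos h1lampos _
          have hcancel : C * ((1-lam) ^ (d:ℝ) / Real.Gamma (d:ℝ) * x ^ ((d:ℝ)-1)
              * Real.exp (-((1-lam)*x)))
              = x ^ ((d:ℝ)-1) / Real.Gamma (d:ℝ)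
                * (Real.exp (-(lam*t)) * Real.exp (-((1-lam)*x))) := by
            rw [hCdef]
            field_simp
          rw [hcancel, Real.one_rpow, ← Real.exp_add]
          have hlhs : 1 / Real.Gamma (d:ℝ) * x ^ ((d:ℝ)-1) * Real.exp (-(1*x))
              = x ^ ((d:ℝ)-1) / Real.Gamma (d:ℝ) * Real.exp (-(1*x)) := by ring
          rw [hlhs]
          apply mul_le_mul_of_nonneg_left _
            (div_nonneg (Real.rpow_nonneg hx0 _) hΓ.le)
          apply Real.exp_le_exp.mpr
          have hxt : lam * t ≤ lam * x := mul_le_mul_of_nonneg_left hx hlam0.le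
          linarith
      _ ≤ ∫⁻ x, ENNReal.ofReal C * gammaPDF (d:ℝ) (1-lam) x :=
          setLIntegral_le_lintegral _ _
      _ = ENNReal.ofReal C * ∫⁻ x, gammaPDF (d:ℝ) (1-lam) x :=
          lintegral_const_mul _ ((measurable_gammaPDFReal (d:ℝ) (1-lam)).ennreal_ofReal)
      _ = ENNReal.ofReal C := by
          rw [lintegral_gammaPDF_eq_one hdpos h1lampos, mul_one]
  -- Step 2: C ≤ δ
  have hstep2 : C ≤ δ := by
    have hC : C = Real.exp ((d:ℝ) * Real.log (1+u) - (d:ℝ)*u) := by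
      rw [hCdef, Real.rpow_def_of_pos h1lampos, h1lam, one_div, Real.log_inv,
        ← Real.exp_sub, hlamt]
      congr 1
      ring
    rw [hC, ← Real.exp_log hδ0]
    apply Real.exp_le_exp.mpr
    rw [hlogeq]
    have hla := log_aux_gamma hu.le
    have h64 : (0:ℝ) < 6 + 4*u := by linarith
    have hkey : 3*(d:ℝ)*u^2 = 4*L*u + 6*L := by
      rw [hudef]
      field_simp
      nlinarith [hs2]
    have heq : (d:ℝ) * (u*(6+u)/(6+4*u)) - (d:ℝ)*u = -(3*(d:ℝ)*u^2)/(6+4*u) := by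
      field_simp
      ring
    have heq2 : -(3*(d:ℝ)*u^2)/(6+4*u) = -L := by
      rw [hkey]
      field_simp
      ring
    have hmul : (d:ℝ) * Real.log (1+u) ≤ (d:ℝ) * (u*(6+u)/(6+4*u)) :=
      mul_le_mul_of_nonneg_left hla hdpos.le
    linarith [hmul, heq, heq2]
  exact hstep1.trans (ENNReal.ofReal_le_ofReal hstep2)
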